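/- Let G = (V,E) be a locally finite graph and q : V → ℝ a potential of class K_{0⁺}. Then the following are equivalent: (i) (G,q) is almost sparse; (ii) for every ε > 0 there is k_ε ≥ 0 such that for all finitely supported f : V → ℂ, (1−ε)(Q_deg(f) + Q_q(f)) − k_ε·‖f‖² ≤ Q_Δ(f) + Q_q(f) ≤ (1+ε)(Q_deg(f) + Q_q(f)) + k_ε·‖f‖²; (iii) for every ε > 0 there is k_ε ≥ 0 such that for all finitely supported f : V → ℂ, (1−ε)(Q_deg(f) + Q_q(f)) − k_ε·‖f‖² ≤ Q_Δ(f) + Q_q(f). -/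

import Mathlib

open scoped BigOperators

noncomputable section

variable {V : Type*} [DecidableEq V] (G : SimpleGraph V) [DecidableRel G.Adj]

/-- The squared `ℓ²`-norm `‖f‖² = ∑_x |f x|²` of a (finitely supported) function. -/
def qNormSq (f : V → ℂ) : ℝ := ∑' x, ‖f x‖ ^ 2

/-- The quadratic form of the Laplacian:
`Q_Δ(f) = (1/2) ∑_{x ~ y} |f x - f y|²` (sum over ordered pairs of adjacent vertices). -/
def qLap (f : V → ℂ) : ℝ :=
  (1 / 2) * ∑' (x : V), ∑' (y : V), if G.Adj x y then ‖f x - f y‖ ^ 2 else 0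

/-- The magnetic quadratic form
`Q_θ(f) = (1/2) ∑_{x ~ y} |f x - e^{iθ(x,y)} f y|²`. -/
def qMag (θ : V → V → ℝ) (f : V → ℂ) : ℝ :=
  (1 / 2) * ∑' (x : V), ∑' (y : V),
    if G.Adj x y then ‖f x - Complex.exp (Complex.I * (θ x y)) * f y‖ ^ 2 else 0

/-- The quadratic form of a potential: `Q_q(f) = ∑_x q x * |f x|²`. -/
def qPot (q : V → ℝ) (f : V → ℂ) : ℝ := ∑' x, q x * ‖f x‖ ^ 2

variable [G.LocallyFinite]

/-- The quadratic form of the degree: `Q_deg(f) = ∑_x deg x * |f x|²`. -/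
def qDeg (f : V → ℂ) : ℝ := ∑' x, (G.degree x : ℝ) * ‖f x‖ ^ 2

/-- Twice the number of undirected edges of the subgraph induced on `W`,
i.e. the number of ordered pairs of adjacent vertices in `W × W`. -/
def edgesTwice (W : Finset V) : ℕ := ((W ×ˢ W).filter fun p => G.Adj p.1 p.2).card

/-- The cardinality `|∂W|` of the edge boundary of `W`. -/
def bdryCard (W : Finset V) : ℕ :=
  ∑ x ∈ W, ((G.neighborFinset x).filter fun y => y ∉ W).card

/-- `(G, q)` is `(a,k)`-sparse: `2|E_W| ≤ k|W| + a(|∂W| + q₊(W))` for all finite `W`. -/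
def IsSparse (q : V → ℝ) (a k : ℝ) : Prop :=
  ∀ W : Finset V,
    (edgesTwice G W : ℝ) ≤ k * W.card + a * ((bdryCard G W : ℝ) + ∑ x ∈ W, max (q x) 0)

/-- The potential `q` belongs to the class `K_α`:
`Q_{q₋}(f) ≤ α (Q_Δ(f) + Q_{q₊}(f)) + C ‖f‖²` for all finitely supported `f`. -/
def KClass (q : V → ℝ) (α : ℝ) : Prop :=
  ∃ C : ℝ, 0 ≤ C ∧ ∀ f : V → ℂ, (Function.support f).Finite →
    qPot (fun x => max (-q x) 0) f ≤
      α * (qLap G f + qPot (fun x => max (q x) 0) f) + C * qNormSq f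

/-- The potential `q` belongs to the magnetic class `K_α^θ`:
`Q_{q₋}(f) ≤ α (Q_θ(f) + Q_{q₊}(f)) + C ‖f‖²` for all finitely supported `f`. -/
def KClassTheta (θ : V → V → ℝ) (q : V → ℝ) (α : ℝ) : Prop :=
  ∃ C : ℝ, 0 ≤ C ∧ ∀ f : V → ℂ, (Function.support f).Finite →
    qPot (fun x => max (-q x) 0) f ≤
      α * (qMag G θ f + qPot (fun x => max (q x) 0) f) + C * qNormSq f

/-- The Cheeger (isoperimetric) constant of `U ⊆ V`:
the infimum over nonempty finite `W ⊆ U` of `(|∂W| + q(W)) / (deg(W) + q(W))`,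
with the convention that the quotient is `0` when the denominator vanishes. -/
def cheeger (q : V → ℝ) (U : Set V) : ℝ :=
  ⨅ W : {W : Finset V // ↑W ⊆ U ∧ W.Nonempty},
    if (∑ x ∈ W.1, ((G.degree x : ℝ) + q x)) = 0 then 0
    else ((bdryCard G W.1 : ℝ) + ∑ x ∈ W.1, q x) / ∑ x ∈ W.1, ((G.degree x : ℝ) + q x)

/-- The Cheeger constant at infinity: `α_∞ = sup over finite K of α_{V∖K}`. -/
def cheegerInfty (q : V → ℝ) : ℝ :=
  ⨆ K : Finset V, cheeger G q ((↑K : Set V)ᶜ)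

set_option linter.unusedSectionVars false
set_option maxHeartbeats 1600000

lemma qNormSq_eq_sum (f : V → ℂ) {s : Finset V} (h : ∀ x, f x ≠ 0 → x ∈ s) :
    qNormSq f = ∑ x ∈ s, ‖f x‖ ^ 2 := by
  apply tsum_eq_sum
  intro x hx
  rw [not_imp_comm.mp (h x) hx]
  simp

lemma qPot_eq_sum (p : V → ℝ) (f : V → ℂ) {s : Finset V} (h : ∀ x, f x ≠ 0 → x ∈ s) :
    qPot p f = ∑ x ∈ s, p x * ‖f x‖ ^ 2 := by
  apply tsum_eq_sum
  intro x hx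
  rw [not_imp_comm.mp (h x) hx]
  simp

lemma qDeg_eq_sum (f : V → ℂ) {s : Finset V} (h : ∀ x, f x ≠ 0 → x ∈ s) :
    qDeg G f = ∑ x ∈ s, (G.degree x : ℝ) * ‖f x‖ ^ 2 := by
  apply tsum_eq_sum
  intro x hx
  rw [not_imp_comm.mp (h x) hx]
  simp

lemma qLap_eq_sum (f : V → ℂ) {s T : Finset V} (h : ∀ x, f x ≠ 0 → x ∈ s)
    (hsT : s ⊆ T) (hnb : ∀ x ∈ s, G.neighborFinset x ⊆ T) :
    qLap G f = (1 / 2) * ∑ x ∈ T, ∑ y ∈ T, if G.Adj x y then ‖f x - f y‖ ^ 2 else 0 := by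
  have hfz : ∀ x, x ∉ s → f x = 0 := fun x hx => not_imp_comm.mp (h x) hx
  have hinner : ∀ x : V, (∑' (y : V), if G.Adj x y then ‖f x - f y‖ ^ 2 else 0)
      = ∑ y ∈ G.neighborFinset x, ‖f x - f y‖ ^ 2 := by
    intro x
    rw [tsum_eq_sum (s := G.neighborFinset x)]
    · apply Finset.sum_congr rfl
      intro y hy
      rw [if_pos ((G.mem_neighborFinset x y).mp hy)]
    · intro y hy
      rw [if_neg (fun hadj => hy ((G.mem_neighborFinset x y).mpr hadj))]
  unfold qLap
  congr 1
  rw [tsum_congr hinner, tsum_eq_sum (s := T)]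
  · apply Finset.sum_congr rfl
    intro x hxT
    rw [Finset.sum_ite, Finset.sum_const_zero, add_zero]
    refine (Finset.sum_subset ?_ ?_).symm
    · intro y hy
      rw [Finset.mem_filter] at hy
      rw [SimpleGraph.mem_neighborFinset]
      exact hy.2
    · intro y hynb hyfil
      have hyadj : G.Adj x y := (G.mem_neighborFinset x y).mp hynb
      have hyT : y ∉ T := fun hyT => hyfil (Finset.mem_filter.mpr ⟨hyT, hyadj⟩)
      have hfy : f y = 0 := hfz y (fun hys => hyT (hsT hys))
      have hfx : f x = 0 := by
        by_contra hfx
        exact hyT (hnb x (h x hfx) hynb)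
      rw [hfx, hfy]
      simp
  · intro x hxT
    apply Finset.sum_eq_zero
    intro y hy
    have hxs : x ∉ s := fun hxs => hxT (hsT hxs)
    have hys : y ∉ s := by
      intro hys
      apply hxT
      apply hnb y hys
      rw [SimpleGraph.mem_neighborFinset] at hy ⊢
      exact hy.symm
    rw [hfz x hxs, hfz y hys]
    simp

/-- inner adjacency count within a superset T of all neighbors -/
lemma filter_adj_eq (x : V) {T : Finset V} (hx : G.neighborFinset x ⊆ T) :
    T.filter (fun y => G.Adj x y) = G.neighborFinset x := by
  ext y
  simp only [Finset.mem_filter, SimpleGraph.mem_neighborFinset]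
  exact ⟨fun h => h.2, fun h => ⟨hx ((G.mem_neighborFinset x y).mpr h), h⟩⟩

lemma sumAdj_left {s T : Finset V} (hsT : s ⊆ T) (hnb : ∀ x ∈ s, G.neighborFinset x ⊆ T)
    (g : V → ℝ) (hg : ∀ x, g x ≠ 0 → x ∈ s) :
    ∑ x ∈ T, ∑ y ∈ T, (if G.Adj x y then g x else 0) = ∑ x ∈ s, (G.degree x : ℝ) * g x := by
  have h1 : ∀ x ∈ T, ∑ y ∈ T, (if G.Adj x y then g x else 0)
      = ((T.filter (fun y => G.Adj x y)).card : ℝ) * g x := by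
    intro x _
    rw [Finset.sum_ite, Finset.sum_const_zero, add_zero, Finset.sum_const, nsmul_eq_mul]
  rw [Finset.sum_congr rfl h1]
  rw [← Finset.sum_subset hsT]
  · apply Finset.sum_congr rfl
    intro x hx
    rw [filter_adj_eq G x (hnb x hx), SimpleGraph.degree]
  · intro x _ hxs
    have : g x = 0 := not_imp_comm.mp (hg x) hxs
    rw [this, mul_zero]

lemma sumAdj_right {s T : Finset V} (hsT : s ⊆ T) (hnb : ∀ x ∈ s, G.neighborFinset x ⊆ T)
    (g : V → ℝ) (hg : ∀ x, g x ≠ 0 → x ∈ s) :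
    ∑ x ∈ T, ∑ y ∈ T, (if G.Adj x y then g y else 0) = ∑ x ∈ s, (G.degree x : ℝ) * g x := by
  rw [Finset.sum_comm]
  rw [← sumAdj_left G hsT hnb g hg]
  apply Finset.sum_congr rfl
  intro x _
  apply Finset.sum_congr rfl
  intro y _
  by_cases h : G.Adj x y
  · rw [if_pos h, if_pos h.symm]
  · rw [if_neg h, if_neg (fun h' => h h'.symm)]

lemma edgesTwice_eq_sum (W : Finset V) :
    (edgesTwice G W : ℝ) = ∑ x ∈ W, ((W.filter (fun y => G.Adj x y)).card : ℝ) := by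
  unfold edgesTwice
  rw [Finset.card_filter]
  push_cast
  rw [Finset.sum_product]
  apply Finset.sum_congr rfl
  intro x _
  rw [Finset.card_filter]
  push_cast
  rfl

/-- deg(W) = 2|E_W| + |∂W| -/
lemma degSum_eq (W : Finset V) :
    ∑ x ∈ W, ((G.degree x : ℝ)) = (edgesTwice G W : ℝ) + (bdryCard G W : ℝ) := by
  rw [edgesTwice_eq_sum]
  unfold bdryCard
  push_cast
  rw [← Finset.sum_add_distrib]
  apply Finset.sum_congr rfl
  intro x _
  have : (W.filter (fun y => G.Adj x y)).card
      = ((G.neighborFinset x).filter (fun y => y ∈ W)).card := by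
    congr 1
    ext y
    simp only [Finset.mem_filter, SimpleGraph.mem_neighborFinset]
    tauto
  rw [this]
  have h2 := Finset.card_filter_add_card_filter_not
    (s := G.neighborFinset x) (p := fun y => y ∈ W)
  rw [SimpleGraph.degree, ← h2]
  push_cast
  ring

lemma sumAdj_both {W T : Finset V} (hWT : W ⊆ T) :
    ∑ x ∈ T, ∑ y ∈ T, (if G.Adj x y then
      (if x ∈ W then (1:ℝ) else 0) * (if y ∈ W then 1 else 0) else 0)
    = (edgesTwice G W : ℝ) := by
  rw [edgesTwice_eq_sum]
  rw [← Finset.sum_subset hWT]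
  · apply Finset.sum_congr rfl
    intro x hxW
    have : ∀ y ∈ T, (if G.Adj x y then
        (if x ∈ W then (1:ℝ) else 0) * (if y ∈ W then 1 else 0) else 0)
        = (if y ∈ W.filter (fun y => G.Adj x y) then (1:ℝ) else 0) := by
      intro y _
      by_cases hadj : G.Adj x y <;> by_cases hyW : y ∈ W <;>
        simp [hadj, hyW, hxW, Finset.mem_filter]
    rw [Finset.sum_congr rfl this, Finset.sum_ite_mem,
      Finset.sum_const, nsmul_eq_mul, mul_one]
    congr 1
    rw [Finset.inter_eq_right.mpr]
    intro y hy
    exact hWT (Finset.mem_filter.mp hy).1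
  · intro x _ hxW
    apply Finset.sum_eq_zero
    intro y _
    simp [hxW]

lemma ssum_indicator {s T W : Finset V} (hWs : W ⊆ s) (hsT : s ⊆ T)
    (hnb : ∀ x ∈ s, G.neighborFinset x ⊆ T) :
    ∑ x ∈ T, ∑ y ∈ T, (if G.Adj x y then
      |(if x ∈ W then (1:ℝ) else 0) - (if y ∈ W then 1 else 0)| else 0)
    = 2 * (bdryCard G W : ℝ) := by
  have hptwise : ∀ x y : V, (if G.Adj x y then
      |(if x ∈ W then (1:ℝ) else 0) - (if y ∈ W then 1 else 0)| else 0)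
      = (if G.Adj x y then (if x ∈ W then (1:ℝ) else 0) else 0)
        + (if G.Adj x y then (if y ∈ W then (1:ℝ) else 0) else 0)
        - 2 * (if G.Adj x y then
            (if x ∈ W then (1:ℝ) else 0) * (if y ∈ W then 1 else 0) else 0) := by
    intro x y
    by_cases hadj : G.Adj x y <;> by_cases hx : x ∈ W <;> by_cases hy : y ∈ W <;>
      simp [hadj, hx, hy] <;> norm_num
  have hsplit : ∑ x ∈ T, ∑ y ∈ T, (if G.Adj x y then
      |(if x ∈ W then (1:ℝ) else 0) - (if y ∈ W then 1 else 0)| else 0)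
      = (∑ x ∈ T, ∑ y ∈ T, (if G.Adj x y then (if x ∈ W then (1:ℝ) else 0) else 0))
      + (∑ x ∈ T, ∑ y ∈ T, (if G.Adj x y then (if y ∈ W then (1:ℝ) else 0) else 0))
      - 2 * ∑ x ∈ T, ∑ y ∈ T, (if G.Adj x y then
          (if x ∈ W then (1:ℝ) else 0) * (if y ∈ W then 1 else 0) else 0) := by
    rw [Finset.mul_sum, ← Finset.sum_add_distrib, ← Finset.sum_sub_distrib]
    apply Finset.sum_congr rfl
    intro x _
    rw [Finset.mul_sum, ← Finset.sum_add_distrib, ← Finset.sum_sub_distrib]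
    exact Finset.sum_congr rfl (fun y _ => hptwise x y)
  have hind : ∀ x : V, (if x ∈ W then (1:ℝ) else 0) ≠ 0 → x ∈ s := by
    intro x hx
    by_cases h : x ∈ W
    · exact hWs h
    · simp [h] at hx
  have hdegW : ∑ x ∈ s, (G.degree x : ℝ) * (if x ∈ W then (1:ℝ) else 0)
      = ∑ x ∈ W, (G.degree x : ℝ) := by
    have : ∀ x ∈ s, (G.degree x : ℝ) * (if x ∈ W then (1:ℝ) else 0)
        = (if x ∈ W then (G.degree x : ℝ) else 0) := by
      intro x _
      split <;> simp
    rw [Finset.sum_congr rfl this, Finset.sum_ite_mem, Finset.inter_eq_right.mpr hWs]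
  rw [hsplit, sumAdj_left G hsT hnb _ hind, sumAdj_right G hsT hnb _ hind,
    sumAdj_both G (hWs.trans hsT), hdegW, degSum_eq]
  ring

lemma layer_cake (q : V → ℝ) {a k : ℝ} (ha : 0 ≤ a) (hsp : IsSparse G q a k)
    {s T : Finset V} (hsT : s ⊆ T) (hnb : ∀ x ∈ s, G.neighborFinset x ⊆ T) :
    ∀ n : ℕ, ∀ F : V → ℝ, (∀ x, 0 ≤ F x) → (∀ x, F x ≠ 0 → x ∈ s) →
      (s.filter fun x => F x ≠ 0).card ≤ n →
    ∑ x ∈ s, ((G.degree x : ℝ) + max (q x) 0) * F x ≤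
      k * ∑ x ∈ s, F x +
      (1 + a) * ((1/2) * (∑ x ∈ T, ∑ y ∈ T, if G.Adj x y then |F x - F y| else 0)
        + ∑ x ∈ s, max (q x) 0 * F x) := by
  intro n
  induction n with
  | zero =>
    intro F hF0 hFs hcard
    have hzero : ∀ x, F x = 0 := by
      intro x
      by_contra hx
      have : x ∈ s.filter fun x => F x ≠ 0 := Finset.mem_filter.mpr ⟨hFs x hx, hx⟩
      have := Finset.card_pos.mpr ⟨x, this⟩
      omega
    simp [hzero]
  | succ n ih =>
    intro F hF0 hFs hcard
    set W := s.filter fun x => F x ≠ 0 with hW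
    by_cases hWne : W.Nonempty
    case neg =>
      have hzero : ∀ x, F x = 0 := by
        intro x
        by_contra hx
        exact hWne ⟨x, Finset.mem_filter.mpr ⟨hFs x hx, hx⟩⟩
      simp [hzero]
    -- main case
    set m := W.inf' hWne F with hm
    have hWs : W ⊆ s := Finset.filter_subset _ _
    have hFW : ∀ x, x ∉ W → F x = 0 := by
      intro x hx
      by_contra hFx
      exact hx (Finset.mem_filter.mpr ⟨hFs x hFx, hFx⟩)
    have hmpos : 0 < m := by
      rw [hm, Finset.lt_inf'_iff]
      intro x hx
      exact lt_of_le_of_ne (hF0 x) (Ne.symm (Finset.mem_filter.mp hx).2)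
    have hmle : ∀ x ∈ W, m ≤ F x := fun x hx => Finset.inf'_le F hx
    obtain ⟨x₀, hx₀W, hx₀⟩ := Finset.exists_mem_eq_inf' hWne F
    set F' := fun x => F x - (if x ∈ W then m else 0) with hF'
    have hF'0 : ∀ x, 0 ≤ F' x := by
      intro x
      by_cases hx : x ∈ W <;> simp [hF', hx]
      · linarith [hmle x hx]
      · exact hF0 x
    have hF's : ∀ x, F' x ≠ 0 → x ∈ s := by
      intro x hx
      by_cases h : x ∈ W
      · exact hWs h
      · simp [hF', h, hFW x h] at hx
    have hF'W : ∀ x, F' x ≠ 0 → x ∈ W := by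
      intro x hx
      by_cases h : x ∈ W
      · exact h
      · simp [hF', h, hFW x h] at hx
    have hcard' : (s.filter fun x => F' x ≠ 0).card ≤ n := by
      have hss : (s.filter fun x => F' x ≠ 0) ⊆ W.erase x₀ := by
        intro x hx
        have hx' := (Finset.mem_filter.mp hx).2
        refine Finset.mem_erase.mpr ⟨?_, hF'W x hx'⟩
        intro hxx
        subst hxx
        simp [hF', hx₀W, ← hx₀] at hx'
        exact hx' (sub_eq_zero.mpr hm.symm)
      have := Finset.card_le_card hss
      have h2 := Finset.card_erase_of_mem hx₀W
      omega
    have ihF' := ih F' hF'0 hF's hcard'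
    -- decomposition F = F' + m·1_W
    have hdecomp : ∀ x, F x = F' x + m * (if x ∈ W then (1:ℝ) else 0) := by
      intro x
      by_cases hx : x ∈ W <;> simp [hF', hx]
    -- linear sums split
    have hlin : ∀ c : V → ℝ, ∑ x ∈ s, c x * F x
        = ∑ x ∈ s, c x * F' x + m * ∑ x ∈ W, c x := by
      intro c
      have : ∀ x ∈ s, c x * F x = c x * F' x + (if x ∈ W then m * c x else 0) := by
        intro x _
        rw [hdecomp x]
        split <;> ring
      rw [Finset.sum_congr rfl this, Finset.sum_add_distrib, Finset.sum_ite_mem,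
        Finset.inter_eq_right.mpr hWs, Finset.mul_sum]
    -- pointwise additivity of |F x - F y|
    have habs : ∀ x y : V, |F x - F y| = |F' x - F' y|
        + m * |(if x ∈ W then (1:ℝ) else 0) - (if y ∈ W then 1 else 0)| := by
      intro x y
      by_cases hx : x ∈ W <;> by_cases hy : y ∈ W
      · simp only [hF', if_pos hx, if_pos hy, sub_sub_sub_cancel_right]
        simp
      · have hFy : F y = 0 := hFW y hy
        have h1 : 0 ≤ F x - m := by linarith [hmle x hx]
        simp only [hF', if_pos hx, if_neg hy, hFy]
        rw [abs_of_nonneg (by linarith), abs_of_nonneg (by linarith), abs_of_nonneg (by norm_num)]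
        ring
      · have hFx : F x = 0 := hFW x hx
        have h1 : 0 ≤ F y - m := by linarith [hmle y hy]
        simp only [hF', if_neg hx, if_pos hy, hFx]
        rw [abs_of_nonpos (by linarith), abs_of_nonpos (by linarith), abs_of_nonpos (by norm_num)]
        ring
      · simp [hF', hx, hy, hFW x hx, hFW y hy]
    have hSS : (∑ x ∈ T, ∑ y ∈ T, if G.Adj x y then |F x - F y| else 0)
        = (∑ x ∈ T, ∑ y ∈ T, if G.Adj x y then |F' x - F' y| else 0)
        + m * (2 * (bdryCard G W : ℝ)) := by
      rw [← ssum_indicator G hWs hsT hnb, Finset.mul_sum, ← Finset.sum_add_distrib]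
      apply Finset.sum_congr rfl
      intro x _
      rw [Finset.mul_sum, ← Finset.sum_add_distrib]
      apply Finset.sum_congr rfl
      intro y _
      by_cases hadj : G.Adj x y
      · simp only [if_pos hadj]
        exact habs x y
      · simp [if_neg hadj]
    -- sparseness at W
    have hspW := hsp W
    have hdegW := degSum_eq G W
    have hcardW : (W.card : ℝ) = ∑ x ∈ W, (1:ℝ) := by simp
    -- put everything together
    have hG1 : ∑ x ∈ s, F x = ∑ x ∈ s, F' x + m * W.card := by
      have := hlin (fun _ => (1:ℝ))
      simp only [one_mul] at this
      rw [this, hcardW]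
    have hG2 : ∑ x ∈ s, max (q x) 0 * F x
        = ∑ x ∈ s, max (q x) 0 * F' x + m * ∑ x ∈ W, max (q x) 0 :=
      hlin (fun x => max (q x) 0)
    have hG3 : ∑ x ∈ W, ((G.degree x : ℝ) + max (q x) 0)
        = (edgesTwice G W : ℝ) + (bdryCard G W : ℝ) + ∑ x ∈ W, max (q x) 0 := by
      rw [Finset.sum_add_distrib, hdegW]
    rw [hlin (fun x => (G.degree x : ℝ) + max (q x) 0), hG1, hG2, hSS, hG3]
    have hmul := mul_le_mul_of_nonneg_left hspW hmpos.le
    nlinarith [ihF', hmpos.le, ha]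

/-- Core analytic bounds from sparseness. -/
lemma core_bounds (q : V → ℝ) {δ k k' : ℝ} (hδ : 0 < δ) (hδ1 : δ ≤ 1/4)
    (hk : 0 ≤ k) (hk' : 2 * k ≤ δ * k') (hsp : IsSparse G q (δ^2) k)
    (f : V → ℂ) (hf : (Function.support f).Finite) :
    (1 - 2*δ) * (qDeg G f + qPot (fun x => max (q x) 0) f) - k' * qNormSq f
      ≤ qLap G f + qPot (fun x => max (q x) 0) f ∧
    qLap G f ≤ (1 + 2*δ) * qDeg G f
      + 2*δ * qPot (fun x => max (q x) 0) f + k' * qNormSq f := by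
  classical
  set s : Finset V := hf.toFinset with hs
  set T : Finset V := s ∪ s.biUnion (fun x => G.neighborFinset x) with hT
  have hsupp : ∀ x, f x ≠ 0 → x ∈ s := by
    intro x hx
    simp [hs, Set.Finite.mem_toFinset, Function.mem_support, hx]
  have hsT : s ⊆ T := Finset.subset_union_left
  have hnb : ∀ x ∈ s, G.neighborFinset x ⊆ T := by
    intro x hx y hy
    exact Finset.mem_union_right _ (Finset.mem_biUnion.mpr ⟨x, hx, hy⟩)
  set h : V → ℝ := fun x => ‖f x‖ with hh
  set F : V → ℝ := fun x => ‖f x‖^2 with hF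
  have hF0 : ∀ x, 0 ≤ F x := fun x => sq_nonneg _
  have hh0 : ∀ x, 0 ≤ h x := fun x => norm_nonneg _
  have hFs : ∀ x, F x ≠ 0 → x ∈ s := by
    intro x hx
    apply hsupp
    intro hfx
    simp [hF, hfx] at hx
  -- abbreviations
  set Dg : ℝ := ∑ x ∈ s, (G.degree x : ℝ) * F x with hDg
  set P : ℝ := ∑ x ∈ s, max (q x) 0 * F x with hP
  set N : ℝ := ∑ x ∈ s, F x with hN
  set Lr2 : ℝ := ∑ x ∈ T, ∑ y ∈ T, (if G.Adj x y then (h x - h y)^2 else 0) with hLr2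
  set S : ℝ := ∑ x ∈ T, ∑ y ∈ T, (if G.Adj x y then |F x - F y| else 0) with hS
  set LC : ℝ := ∑ x ∈ T, ∑ y ∈ T, (if G.Adj x y then ‖f x - f y‖^2 else 0) with hLC
  have hDg0 : 0 ≤ Dg := Finset.sum_nonneg fun x _ => mul_nonneg (by positivity) (hF0 x)
  have hP0 : 0 ≤ P := Finset.sum_nonneg fun x _ =>
    mul_nonneg (le_max_right _ _) (hF0 x)
  have hN0 : 0 ≤ N := Finset.sum_nonneg fun x _ => hF0 x
  have hLr20 : 0 ≤ Lr2 := Finset.sum_nonneg fun x _ => Finset.sum_nonneg fun y _ => by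
    split
    · exact sq_nonneg _
    · exact le_refl 0
  -- sum of h^2 over adjacency pairs
  have e1 : ∑ x ∈ T, ∑ y ∈ T, (if G.Adj x y then F x else 0) = Dg :=
    sumAdj_left G hsT hnb F hFs
  have e2 : ∑ x ∈ T, ∑ y ∈ T, (if G.Adj x y then F y else 0) = Dg :=
    sumAdj_right G hsT hnb F hFs
  -- Qsum identity
  have hQsum : ∑ x ∈ T, ∑ y ∈ T, (if G.Adj x y then (h x + h y)^2 else 0)
      = 4 * Dg - Lr2 := by
    have hpt : ∀ x y : V, (if G.Adj x y then (h x + h y)^2 else 0)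
        = 2 * (if G.Adj x y then F x else 0) + 2 * (if G.Adj x y then F y else 0)
          - (if G.Adj x y then (h x - h y)^2 else 0) := by
      intro x y
      by_cases hadj : G.Adj x y <;> simp [hadj, hF, hh]
      ring
    calc ∑ x ∈ T, ∑ y ∈ T, (if G.Adj x y then (h x + h y)^2 else 0)
        = ∑ x ∈ T, ∑ y ∈ T, (2 * (if G.Adj x y then F x else 0)
            + 2 * (if G.Adj x y then F y else 0)
            - (if G.Adj x y then (h x - h y)^2 else 0)) := by
          exact Finset.sum_congr rfl fun x _ => Finset.sum_congr rfl fun y _ => hpt x y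
      _ = 4 * Dg - Lr2 := by
          simp only [Finset.sum_sub_distrib, Finset.sum_add_distrib, ← Finset.mul_sum]
          rw [e1, e2, ← hLr2]
          ring
  -- AM-GM per pair: 2(1+δ) S ≤ (1+δ)² Lr2 + (4 Dg - Lr2)
  have hAMGM : 2*(1+δ) * S ≤ (1+δ)^2 * Lr2 + (4*Dg - Lr2) := by
    rw [← hQsum, hS, hLr2, Finset.mul_sum, Finset.mul_sum]
    rw [← Finset.sum_add_distrib]
    apply Finset.sum_le_sum
    intro x _
    rw [Finset.mul_sum, Finset.mul_sum, ← Finset.sum_add_distrib]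
    apply Finset.sum_le_sum
    intro y _
    by_cases hadj : G.Adj x y
    · simp only [if_pos hadj]
      have hFx : F x = h x ^ 2 := by simp [hF, hh]
      have hFy : F y = h y ^ 2 := by simp [hF, hh]
      rcases abs_cases (F x - F y) with ⟨habs, _⟩ | ⟨habs, _⟩ <;>
        rw [habs, hFx, hFy] <;>
        nlinarith [sq_nonneg ((1+δ)*(h x - h y) - (h x + h y)),
          sq_nonneg ((1+δ)*(h x - h y) + (h x + h y)), hh0 x, hh0 y, hδ.le]
    · simp [hadj]
  -- layer cake
  have hlay := layer_cake G q (by positivity) hsp hsT hnb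
    (s.filter fun x => F x ≠ 0).card F hF0 hFs le_rfl
  have hlay' : Dg + P ≤ k * N + (1 + δ^2) * ((1/2) * S + P) := by
    have : ∑ x ∈ s, ((G.degree x : ℝ) + max (q x) 0) * F x = Dg + P := by
      rw [hDg, hP, ← Finset.sum_add_distrib]
      exact Finset.sum_congr rfl fun x _ => by ring
    rw [this] at hlay
    exact hlay
  -- central: (1-2δ) Dg ≤ Lr2/2 + 2δ P + k' N
  have hS0 : 0 ≤ S := Finset.sum_nonneg fun x _ => Finset.sum_nonneg fun y _ => by
    split
    · exact abs_nonneg _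
    · exact le_refl 0
  have key2 : 4*δ*(1-δ)*Dg ≤ 4*(1+δ)*(k*N) + δ*(1+δ^2)*(2+δ)*Lr2 + 4*(1+δ)*δ^2*P := by
    nlinarith [hlay', hAMGM, hS0, hδ.le, mul_nonneg (mul_nonneg hδ.le hδ.le) hS0]
  have central : (1-2*δ)*Dg ≤ Lr2/2 + 2*δ*P + k'*N := by
    nlinarith [key2, hδ, hδ1, hDg0, hP0, hN0, hLr20, mul_nonneg hk hN0,
      mul_nonneg hδ.le (mul_nonneg hk hN0),
      mul_nonneg hδ.le (mul_nonneg hδ.le (mul_nonneg hk hN0)),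
      mul_nonneg hδ.le hLr20, mul_nonneg hδ.le (mul_nonneg hδ.le hLr20),
      mul_nonneg (mul_nonneg hδ.le hδ.le) (mul_nonneg hδ.le hLr20),
      mul_nonneg (mul_nonneg (mul_nonneg hδ.le hδ.le) (mul_nonneg hδ.le hδ.le)) hLr20,
      mul_nonneg hδ.le hP0, mul_nonneg hδ.le (mul_nonneg hδ.le hP0),
      mul_nonneg (mul_nonneg hδ.le hδ.le) (mul_nonneg hδ.le hP0),
      mul_nonneg hδ.le hDg0, mul_nonneg hδ.le (mul_nonneg hδ.le hDg0),
      mul_le_mul_of_nonneg_right hk' hN0]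
  -- qLap comparisons
  have hbridgeL : qLap G f = (1/2) * LC := qLap_eq_sum G f hsupp hsT hnb
  have hLlow : Lr2 ≤ LC := by
    apply Finset.sum_le_sum
    intro x _
    apply Finset.sum_le_sum
    intro y _
    by_cases hadj : G.Adj x y
    · simp only [if_pos hadj]
      have h1 : |h x - h y| ≤ ‖f x - f y‖ := abs_norm_sub_norm_le (f x) (f y)
      calc (h x - h y)^2 = |h x - h y|^2 := (sq_abs _).symm
        _ ≤ ‖f x - f y‖^2 := by
            have := abs_nonneg (h x - h y)
            nlinarith
    · simp [hadj]
  have hLup : LC ≤ 4*Dg - Lr2 := by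
    rw [← hQsum]
    apply Finset.sum_le_sum
    intro x _
    apply Finset.sum_le_sum
    intro y _
    by_cases hadj : G.Adj x y
    · simp only [if_pos hadj]
      have h1 : ‖f x - f y‖ ≤ h x + h y := norm_sub_le (f x) (f y)
      have h2 : 0 ≤ ‖f x - f y‖ := norm_nonneg _
      nlinarith
    · simp [hadj]
  -- bridges
  have hbD : qDeg G f = Dg := qDeg_eq_sum G f hsupp
  have hbP : qPot (fun x => max (q x) 0) f = P := qPot_eq_sum _ f hsupp
  have hbN : qNormSq f = N := qNormSq_eq_sum f hsupp
  rw [hbD, hbP, hbN, hbridgeL]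
  constructor
  · nlinarith [central, hLlow]
  · nlinarith [central, hLup]

section Indicator
variable (W : Finset V)

def indC (W : Finset V) : V → ℂ := fun x => if x ∈ W then (1:ℂ) else 0

lemma indC_supp : ∀ x, indC W x ≠ 0 → x ∈ W := by
  intro x hx
  by_contra h
  simp [indC, h] at hx

lemma indC_fin : (Function.support (indC W)).Finite := by
  apply Set.Finite.subset W.finite_toSet
  intro x hx
  exact indC_supp W x hx

lemma qNormSq_indC : qNormSq (indC W) = W.card := by
  rw [qNormSq_eq_sum (indC W) (indC_supp W)]
  rw [Finset.card_eq_sum_ones, Nat.cast_sum]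
  apply Finset.sum_congr rfl
  intro x hx
  simp [indC, hx]

lemma qPot_indC (p : V → ℝ) : qPot p (indC W) = ∑ x ∈ W, p x := by
  rw [qPot_eq_sum p (indC W) (indC_supp W)]
  apply Finset.sum_congr rfl
  intro x hx
  simp [indC, hx]

lemma qDeg_indC : qDeg G (indC W) = ∑ x ∈ W, (G.degree x : ℝ) := by
  rw [qDeg_eq_sum G (indC W) (indC_supp W)]
  apply Finset.sum_congr rfl
  intro x hx
  simp [indC, hx]

lemma qLap_indC : qLap G (indC W) = (bdryCard G W : ℝ) := by
  set T : Finset V := W ∪ W.biUnion (fun x => G.neighborFinset x) with hT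
  have hsT : W ⊆ T := Finset.subset_union_left
  have hnb : ∀ x ∈ W, G.neighborFinset x ⊆ T := by
    intro x hx y hy
    exact Finset.mem_union_right _ (Finset.mem_biUnion.mpr ⟨x, hx, hy⟩)
  rw [qLap_eq_sum G (indC W) (indC_supp W) hsT hnb]
  have hpt : ∀ x y : V, (if G.Adj x y then ‖indC W x - indC W y‖^2 else 0)
      = (if G.Adj x y then
          |(if x ∈ W then (1:ℝ) else 0) - (if y ∈ W then 1 else 0)| else 0) := by
    intro x y
    by_cases hadj : G.Adj x y <;> by_cases hx : x ∈ W <;> by_cases hy : y ∈ W <;>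
      simp [indC, hadj, hx, hy]
  calc (1/2) * ∑ x ∈ T, ∑ y ∈ T, (if G.Adj x y then ‖indC W x - indC W y‖^2 else 0)
      = (1/2) * ∑ x ∈ T, ∑ y ∈ T, (if G.Adj x y then
          |(if x ∈ W then (1:ℝ) else 0) - (if y ∈ W then 1 else 0)| else 0) := by
        congr 1
        exact Finset.sum_congr rfl fun x _ => Finset.sum_congr rfl fun y _ => hpt x y
    _ = (bdryCard G W : ℝ) := by
        rw [ssum_indicator G (le_refl W) hsT hnb]
        ring

end Indicator

lemma qPot_split (p : V → ℝ) (f : V → ℂ) (hf : (Function.support f).Finite) :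
    qPot p f = qPot (fun x => max (p x) 0) f - qPot (fun x => max (-p x) 0) f := by
  have hsupp : ∀ x, f x ≠ 0 → x ∈ hf.toFinset := by
    intro x hx
    simp [Set.Finite.mem_toFinset, Function.mem_support, hx]
  rw [qPot_eq_sum p f hsupp, qPot_eq_sum _ f hsupp, qPot_eq_sum _ f hsupp,
    ← Finset.sum_sub_distrib]
  apply Finset.sum_congr rfl
  intro x _
  have : max (p x) 0 - max (-p x) 0 = p x := by
    rcases le_or_gt (p x) 0 with h | h
    · rw [max_eq_right h, max_eq_left (by linarith)]
      ring
    · rw [max_eq_left h.le, max_eq_right (by linarith)]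
      ring
  conv_lhs => rw [← this]
  ring



lemma qLap_nonneg (f : V → ℂ) : 0 ≤ qLap G f := by
  apply mul_nonneg (by norm_num)
  apply tsum_nonneg
  intro x
  apply tsum_nonneg
  intro y
  split
  · positivity
  · exact le_refl 0

lemma C_to_A (q : V → ℝ)
    (hC : ∀ ε : ℝ, 0 < ε → ∃ kε : ℝ, 0 ≤ kε ∧
      ∀ f : V → ℂ, (Function.support f).Finite →
        (1 - ε) * (qDeg G f + qPot q f) - kε * qNormSq f ≤ qLap G f + qPot q f) :
    ∀ ε : ℝ, 0 < ε → ∃ kε : ℝ, 0 ≤ kε ∧ IsSparse G q ε kε := by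
  intro ε hε
  have hε1 : (0:ℝ) < 1 + ε := by linarith
  set ε₀ := ε / (1 + ε) with hε₀def
  have hε₀ : 0 < ε₀ := div_pos hε hε1
  obtain ⟨k₀, hk₀, hineq⟩ := hC ε₀ hε₀
  refine ⟨k₀ * (1 + ε), by positivity, ?_⟩
  intro W
  have h := hineq (indC W) (indC_fin W)
  rw [qDeg_indC, qPot_indC, qLap_indC, qNormSq_indC] at h
  have hdeg := degSum_eq G W
  have hQle : ∑ x ∈ W, q x ≤ ∑ x ∈ W, max (q x) 0 :=
    Finset.sum_le_sum fun x _ => le_max_left _ _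
  have hkey : (1 - ε₀) * (1 + ε) = 1 := by
    rw [hε₀def]
    field_simp
    ring
  set D := ∑ x ∈ W, (G.degree x : ℝ) with hD
  set Q := ∑ x ∈ W, q x with hQ
  have h3 := mul_le_mul_of_nonneg_left h hε1.le
  have h4 : D + Q ≤ (1+ε) * ((bdryCard G W : ℝ) + Q) + (1+ε) * (k₀ * W.card) := by
    calc D + Q = (1+ε) * ((1-ε₀)*(D+Q) - k₀ * W.card) + (1+ε) * (k₀ * W.card) := by
          have : (1-ε₀)*(1+ε)*(D+Q) = D + Q := by rw [hkey]; ring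
          linarith [this]
      _ ≤ (1+ε) * ((bdryCard G W : ℝ) + Q) + (1+ε) * (k₀ * W.card) := by linarith [h3]
  nlinarith [h4, hdeg, mul_le_mul_of_nonneg_left hQle hε.le, hk₀,
    (by positivity : (0:ℝ) ≤ (W.card : ℝ)),
    (by positivity : (0:ℝ) ≤ (bdryCard G W : ℝ))]

lemma A_to_B (q : V → ℝ) (hq : ∀ α : ℝ, 0 < α → α < 1 → KClass G q α)
    (hA : ∀ ε : ℝ, 0 < ε → ∃ kε : ℝ, 0 ≤ kε ∧ IsSparse G q ε kε) :
    ∀ ε : ℝ, 0 < ε → ∃ kε : ℝ, 0 ≤ kε ∧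
      ∀ f : V → ℂ, (Function.support f).Finite →
        (1 - ε) * (qDeg G f + qPot q f) - kε * qNormSq f ≤ qLap G f + qPot q f ∧
        qLap G f + qPot q f ≤ (1 + ε) * (qDeg G f + qPot q f) + kε * qNormSq f := by
  intro ε hε
  set ε₀ := min ε (1/2) with hε₀def
  have hε₀ : 0 < ε₀ := lt_min hε (by norm_num)
  have hε₀le : ε₀ ≤ ε := min_le_left _ _
  have hε₀half : ε₀ ≤ 1/2 := min_le_right _ _
  set δ := ε₀/8 with hδdef
  have hδ : 0 < δ := by positivity
  have hδ1 : δ ≤ 1/4 := by rw [hδdef]; linarith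
  obtain ⟨k, hk, hsp⟩ := hA (δ^2) (by positivity)
  set k' := 2*k/δ with hk'def
  have hk'0 : 0 ≤ k' := by positivity
  have hk' : 2*k ≤ δ*k' := by
    rw [hk'def, mul_div_assoc', mul_comm δ (2*k), mul_div_assoc,
      div_self hδ.ne', mul_one]
  set α := ε₀/8 with hαdef
  have hα0 : 0 < α := by positivity
  have hα1 : α < 1 := by rw [hαdef]; linarith
  obtain ⟨C, hC0, hKC⟩ := hq α hα0 hα1
  refine ⟨(1+ε)*(k' + C), by positivity, ?_⟩
  intro f hf
  obtain ⟨c1, c2⟩ := core_bounds G q hδ hδ1 hk hk' hsp f hf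
  have hsplit := qPot_split q f hf
  have hKf := hKC f hf
  set Dg := qDeg G f with hDgdef
  set P := qPot (fun x => max (q x) 0) f with hPdef
  set M := qPot (fun x => max (-q x) 0) f with hMdef
  set N := qNormSq f with hNdef
  set L := qLap G f with hLdef
  have hDg0 : 0 ≤ Dg := tsum_nonneg fun x => by positivity
  have hP0 : 0 ≤ P := tsum_nonneg fun x => mul_nonneg (le_max_right _ _) (by positivity)
  have hM0 : 0 ≤ M := tsum_nonneg fun x => mul_nonneg (le_max_right _ _) (by positivity)
  have hN0 : 0 ≤ N := tsum_nonneg fun x => by positivity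
  have hDP0 : 0 ≤ Dg + P := by linarith
  have hM2 : M ≤ 2*α*(Dg + P) + (k' + C)*N := by
    nlinarith [hKf, c2, hDg0, hP0, hN0, hα0.le, hα1.le, hδ1, hδ.le,
      mul_le_mul_of_nonneg_left c2 hα0.le,
      mul_nonneg hα0.le hDg0, mul_nonneg hα0.le hP0,
      mul_nonneg hα0.le (mul_nonneg hk'0 hN0),
      mul_nonneg hδ.le (mul_nonneg hα0.le hDg0),
      mul_nonneg hδ.le (mul_nonneg hα0.le hP0),
      mul_nonneg (mul_nonneg hα0.le hk'0) hN0]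
  have hcoef : 2*δ + 2*α*ε ≤ (3/8)*ε := by
    rw [hδdef, hαdef]
    nlinarith [mul_le_mul_of_nonneg_right hε₀half hε.le, hε₀le, hε.le]
  have hcDP := mul_le_mul_of_nonneg_right hcoef hDP0
  have hεM := mul_le_mul_of_nonneg_left hM2 hε.le
  rw [hsplit]
  constructor
  · nlinarith [c1, hεM, hcDP, mul_nonneg hε.le hDP0, mul_nonneg hC0 hN0,
      mul_nonneg hε.le hN0, mul_nonneg hk'0 hN0]
  · nlinarith [c2, hεM, hcDP, mul_nonneg hε.le hDP0, mul_nonneg hC0 hN0,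
      mul_nonneg hε.le hN0, mul_nonneg hk'0 hN0]


/-- for `q ∈ K_{0⁺}`, the following are equivalent:
(i) `(G,q)` is almost sparse;
(ii) for every `ε > 0` a two-sided form inequality with constant `k_ε ≥ 0`;
(iii) for every `ε > 0` the lower form inequality with constant `k_ε ≥ 0`. -/
theorem stmt7 [Countable V] (q : V → ℝ)
    (hq : ∀ α : ℝ, 0 < α → α < 1 → KClass G q α) :
    ((∀ ε : ℝ, 0 < ε → ∃ kε : ℝ, 0 ≤ kε ∧ IsSparse G q ε kε) ↔
      (∀ ε : ℝ, 0 < ε → ∃ kε : ℝ, 0 ≤ kε ∧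
        ∀ f : V → ℂ, (Function.support f).Finite →
          (1 - ε) * (qDeg G f + qPot q f) - kε * qNormSq f ≤ qLap G f + qPot q f ∧
          qLap G f + qPot q f ≤ (1 + ε) * (qDeg G f + qPot q f) + kε * qNormSq f)) ∧
    ((∀ ε : ℝ, 0 < ε → ∃ kε : ℝ, 0 ≤ kε ∧
        ∀ f : V → ℂ, (Function.support f).Finite →
          (1 - ε) * (qDeg G f + qPot q f) - kε * qNormSq f ≤ qLap G f + qPot q f ∧
          qLap G f + qPot q f ≤ (1 + ε) * (qDeg G f + qPot q f) + kε * qNormSq f) ↔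
      (∀ ε : ℝ, 0 < ε → ∃ kε : ℝ, 0 ≤ kε ∧
        ∀ f : V → ℂ, (Function.support f).Finite →
          (1 - ε) * (qDeg G f + qPot q f) - kε * qNormSq f ≤ qLap G f + qPot q f)) := by
  have hBC : (∀ ε : ℝ, 0 < ε → ∃ kε : ℝ, 0 ≤ kε ∧
      ∀ f : V → ℂ, (Function.support f).Finite →
        (1 - ε) * (qDeg G f + qPot q f) - kε * qNormSq f ≤ qLap G f + qPot q f ∧
        qLap G f + qPot q f ≤ (1 + ε) * (qDeg G f + qPot q f) + kε * qNormSq f) →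
      (∀ ε : ℝ, 0 < ε → ∃ kε : ℝ, 0 ≤ kε ∧
        ∀ f : V → ℂ, (Function.support f).Finite →
          (1 - ε) * (qDeg G f + qPot q f) - kε * qNormSq f ≤ qLap G f + qPot q f) := by
    intro hB ε hε
    obtain ⟨kε, hkε, h⟩ := hB ε hε
    exact ⟨kε, hkε, fun f hf => (h f hf).1⟩
  refine ⟨⟨A_to_B G q hq, fun hB => C_to_A G q (hBC hB)⟩,
    ⟨hBC, fun hC => A_to_B G q hq (C_to_A G q hC)⟩⟩


end
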